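/- Let n ≥ 2, Δ > 0, and let (c_m)_{m∈ℤ} be a bounded sequence with 0 ≤ c_m − c_{m−1} ≤ Δ for all m ∈ ℤ. Then the spline f(x) = Σ_{m∈ℤ} c_m βⁿ(x/Δ − m) is differentiable with 0 ≤ f'(x) ≤ 1 for all x, and hence is firmly nonexpansive. -/

import Mathlib

open MeasureTheory

/-- The B-spline of order `n`: `β⁰` is the indicator of `[-1/2, 1/2]` and
`βⁿ = βⁿ⁻¹ * β⁰` (convolution). -/
noncomputable def bspline : ℕ → ℝ → ℝ
  | 0 => Set.indicator (Set.Icc (-(1 / 2) : ℝ) (1 / 2)) (fun _ => 1)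
  | n + 1 => fun x => ∫ t in Set.Icc (-(1 / 2) : ℝ) (1 / 2), bspline n (x - t)

/-- For `n ≥ 2`, a B-spline series whose bounded coefficients satisfy
`0 ≤ c_m − c_{m−1} ≤ Δ` is differentiable with derivative in `[0,1]`, hence firmly
nonexpansive. -/
lemma bspline_nonneg : ∀ (n : ℕ) (x : ℝ), 0 ≤ bspline n x := by
  intro n
  induction n with
  | zero => intro x; exact Set.indicator_nonneg (fun _ _ => zero_le_one) x
  | succ n ih =>
      intro x
      exact setIntegral_nonneg measurableSet_Icc fun t _ => ih (x - t)

lemma bspline_zero : ∀ (n : ℕ) (x : ℝ), (n : ℝ) + 1 ≤ |x| → bspline n x = 0 := by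
  intro n
  induction n with
  | zero =>
      intro x hx
      simp only [Nat.cast_zero, zero_add] at hx
      apply Set.indicator_of_notMem
      intro hmem
      rw [Set.mem_Icc] at hmem
      rcases abs_cases x with ⟨h1, h2⟩ | ⟨h1, h2⟩ <;> linarith [hmem.1, hmem.2]
  | succ n ih =>
      intro x hx
      show (∫ t in Set.Icc (-(1 / 2) : ℝ) (1 / 2), bspline n (x - t)) = 0
      rw [setIntegral_congr_fun measurableSet_Icc (g := fun _ => (0:ℝ))]
      · exact integral_zero _ _
      · intro t ht
        rw [Set.mem_Icc] at ht
        apply ih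
        push_cast at hx ⊢
        rcases abs_cases x with ⟨h1, h2⟩ | ⟨h1, h2⟩ <;>
          rcases abs_cases (x - t) with ⟨h3, h4⟩ | ⟨h3, h4⟩ <;> linarith [ht.1, ht.2]

lemma bspline_rep (n : ℕ) (x : ℝ) :
    bspline (n + 1) x = ∫ s in (x - 1/2)..(x + 1/2), bspline n s := by
  show (∫ t in Set.Icc (-(1 / 2) : ℝ) (1 / 2), bspline n (x - t)) = _
  rw [integral_Icc_eq_integral_Ioc,
    ← intervalIntegral.integral_of_le (by norm_num : (-(1/2):ℝ) ≤ 1/2),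
    intervalIntegral.integral_comp_sub_left (bspline n) x]
  norm_num

lemma bspline_one_eq (x : ℝ) : bspline 1 x = max (1 - |x|) 0 := by
  rw [bspline_rep, intervalIntegral.integral_of_le (by linarith : x - 1/2 ≤ x + 1/2),
    ← integral_Icc_eq_integral_Ioc]
  show (∫ s in Set.Icc (x - 1/2) (x + 1/2),
      Set.indicator (Set.Icc (-(1 / 2) : ℝ) (1 / 2)) (fun _ => (1:ℝ)) s) = _
  rw [setIntegral_indicator measurableSet_Icc, setIntegral_const, Set.Icc_inter_Icc,
    Real.volume_real_Icc, smul_eq_mul, mul_one]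
  rcases abs_cases x with ⟨h1, h2⟩ | ⟨h1, h2⟩ <;>
    simp only [max_def, min_def] <;> split_ifs <;> linarith

lemma bspline_compactSupport (n : ℕ) : HasCompactSupport (bspline n) := by
  apply HasCompactSupport.intro (isCompact_Icc (a := -((n:ℝ)+1)) (b := (n:ℝ)+1))
  intro x hx
  apply bspline_zero
  rw [Set.mem_Icc] at hx
  rcases abs_cases x with ⟨h1, h2⟩ | ⟨h1, h2⟩ <;> push_neg at hx <;>
    rcases le_or_gt (-((n:ℝ)+1)) x with h | h <;> first | linarith [hx h] | linarith

lemma bspline_zero_integrable : Integrable (bspline 0) := by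
  have h0 : bspline 0 = Set.indicator (Set.Icc (-(1/2):ℝ) (1/2)) (fun _ => (1:ℝ)) := rfl
  rw [h0, integrable_indicator_iff measurableSet_Icc]
  exact integrableOn_const measure_Icc_lt_top.ne

lemma bspline_hasDerivAt (n : ℕ) (hc : Continuous (bspline n)) (hi : Integrable (bspline n))
    (x : ℝ) :
    HasDerivAt (bspline (n + 1)) (bspline n (x + 1/2) - bspline n (x - 1/2)) x := by
  have hG : ∀ u : ℝ, HasDerivAt (fun v => ∫ s in (0:ℝ)..v, bspline n s) (bspline n u) u :=
    fun u => intervalIntegral.integral_hasDerivAt_right (hi.intervalIntegrable)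
      (hc.stronglyMeasurable.stronglyMeasurableAtFilter) hc.continuousAt
  have key : ∀ y : ℝ, bspline (n+1) y =
      (∫ s in (0:ℝ)..(y + 1/2), bspline n s) - ∫ s in (0:ℝ)..(y - 1/2), bspline n s := by
    intro y
    rw [bspline_rep, intervalIntegral.integral_interval_sub_left hi.intervalIntegrable
      hi.intervalIntegrable]
  have h1 : HasDerivAt (fun y : ℝ => ∫ s in (0:ℝ)..(y + 1/2), bspline n s)
      (bspline n (x + 1/2)) x := by
    simpa [Function.comp_def] using (hG (x + 1/2)).comp x ((hasDerivAt_id x).add_const (1/2))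
  have h2 : HasDerivAt (fun y : ℝ => ∫ s in (0:ℝ)..(y - 1/2), bspline n s)
      (bspline n (x - 1/2)) x := by
    simpa [Function.comp_def] using (hG (x - 1/2)).comp x ((hasDerivAt_id x).sub_const (1/2))
  exact (h1.sub h2).congr_of_eventuallyEq (Filter.Eventually.of_forall key)

lemma bspline_continuous : ∀ (n : ℕ), Continuous (bspline (n + 1)) := by
  have key : ∀ (n : ℕ), Continuous (bspline (n + 1)) ∧ Integrable (bspline (n + 1)) := by
    intro n
    induction n with
    | zero =>
        have hc : Continuous (bspline 1) := by
          have : bspline 1 = fun x => max (1 - |x|) 0 := funext bspline_one_eq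
          rw [this]
          exact ((continuous_const.sub continuous_abs).max continuous_const)
        exact ⟨hc, hc.integrable_of_hasCompactSupport (bspline_compactSupport 1)⟩
    | succ n ih =>
        have hc : Continuous (bspline (n + 2)) := by
          have : Differentiable ℝ (bspline (n + 2)) := fun x =>
            (bspline_hasDerivAt (n+1) ih.1 ih.2 x).differentiableAt
          exact this.continuous
        exact ⟨hc, hc.integrable_of_hasCompactSupport (bspline_compactSupport _)⟩
  exact fun n => (key n).1

lemma bspline_integrable : ∀ (n : ℕ), Integrable (bspline n) := by
  rintro (_ | n)
  · exact bspline_zero_integrable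
  · exact (bspline_continuous n).integrable_of_hasCompactSupport (bspline_compactSupport _)

lemma bspline_hasDerivAt' (n : ℕ) (x : ℝ) :
    HasDerivAt (bspline (n + 2)) (bspline (n+1) (x + 1/2) - bspline (n+1) (x - 1/2)) x :=
  bspline_hasDerivAt (n+1) (bspline_continuous n) (bspline_integrable (n+1)) x

lemma bspline_partition : ∀ (n : ℕ) (y : ℝ) (S : Finset ℤ),
    (∀ m : ℤ, |y - (m : ℝ)| ≤ (n : ℝ) + 4 → m ∈ S) →
    ∑ m ∈ S, bspline (n + 1) (y - (m : ℝ)) = 1 := by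
  intro n
  induction n with
  | zero =>
      intro y S hS
      have hfl : (Int.floor y : ℝ) ≤ y := Int.floor_le y
      have hfl2 : y < (Int.floor y : ℝ) + 1 := Int.lt_floor_add_one y
      have hsub : ({Int.floor y, Int.floor y + 1} : Finset ℤ) ⊆ S := by
        intro m hm
        rcases Finset.mem_insert.1 hm with rfl | hm
        · exact hS _ (by rw [abs_of_nonneg (by linarith)]; push_cast; linarith)
        · rw [Finset.mem_singleton] at hm; subst hm
          exact hS _ (by rw [abs_of_nonpos (by push_cast; linarith)]; push_cast; linarith)
      rw [← Finset.sum_subset hsub]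
      · rw [Finset.sum_pair (by omega)]
        rw [bspline_one_eq, bspline_one_eq,
          abs_of_nonneg (by linarith : (0:ℝ) ≤ y - (Int.floor y : ℝ)),
          abs_of_nonpos (by push_cast; linarith : y - ((Int.floor y + 1 : ℤ) : ℝ) ≤ 0)]
        push_cast
        rw [max_eq_left (by linarith), max_eq_left (by linarith)]
        ring
      · intro m hmS hm
        rw [Finset.mem_insert, Finset.mem_singleton] at hm
        push_neg at hm
        rw [bspline_one_eq, max_eq_right]
        have : m ≤ Int.floor y - 1 ∨ Int.floor y + 2 ≤ m := by omega
        rcases this with h | h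
        · have : (m:ℝ) ≤ (Int.floor y : ℝ) - 1 := by exact_mod_cast (by push_cast; linarith)
          rw [abs_of_nonneg (by linarith)] ; linarith
        · have : (Int.floor y : ℝ) + 2 ≤ (m:ℝ) := by exact_mod_cast (by push_cast; linarith)
          rw [abs_of_nonpos (by linarith)] ; linarith
  | succ n ih =>
      intro y S hS
      have heq : ∀ m ∈ S, bspline (n + 2) (y - (m:ℝ)) =
          ∫ t in Set.Icc (-(1 / 2) : ℝ) (1 / 2), bspline (n+1) (y - (m:ℝ) - t) := fun _ _ => rfl
      rw [Finset.sum_congr rfl heq, ← integral_finset_sum]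
      · rw [setIntegral_congr_fun measurableSet_Icc (g := fun _ => (1:ℝ))]
        · rw [setIntegral_const, Real.volume_real_Icc, smul_eq_mul, mul_one]
          rw [show (1:ℝ)/2 - (-(1/2)) = 1 by norm_num]
          simp
        · intro t ht
          rw [Set.mem_Icc] at ht
          show ∑ m ∈ S, bspline (n + 1) (y - (m:ℝ) - t) = 1
          have : ∀ m ∈ S, bspline (n+1) (y - (m:ℝ) - t) = bspline (n+1) ((y - t) - (m:ℝ)) := by
            intro m _; ring_nf
          rw [Finset.sum_congr rfl this]
          apply ih (y - t) S
          intro m hm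
          apply hS
          push_cast at hm ⊢
          rcases abs_cases (y - t - m) with ⟨h1, h2⟩ | ⟨h1, h2⟩ <;>
            rcases abs_cases (y - (m:ℝ)) with ⟨h3, h4⟩ | ⟨h3, h4⟩ <;> linarith [ht.1, ht.2]
      · intro m _
        exact ((integrable_comp_sub_left (bspline (n+1)) (y - (m:ℝ))).2
          (bspline_integrable (n+1))).restrict

lemma Icc_int_succ_right (a b : ℤ) (h : a ≤ b + 1) :
    Finset.Icc a (b + 1) = insert (b + 1) (Finset.Icc a b) := by
  ext m; simp only [Finset.mem_Icc, Finset.mem_insert]; omega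

lemma abel_helper (a : ℤ) (c g : ℤ → ℝ) :
    ∀ b : ℤ, a ≤ b →
      ∑ m ∈ Finset.Icc a b, c m * (g m - g (m + 1)) =
        (∑ m ∈ Finset.Icc a b, (c m - c (m - 1)) * g m) + c (a - 1) * g a - c b * g (b + 1) := by
  refine Int.le_induction ?_ ?_
  · rw [Finset.Icc_self, Finset.sum_singleton, Finset.sum_singleton]
    ring
  · intro b hb ih
    rw [Icc_int_succ_right a b (by omega), Finset.sum_insert (by simp), ih,
      Finset.sum_insert (by simp), show b + 1 - 1 = b from by omega]
    generalize (∑ m ∈ Finset.Icc a b, (c m - c (m - 1)) * g m) = Sg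
    ring

theorem bspline_series_firmly_nonexpansive (n : ℕ) (hn : 2 ≤ n) (Δ : ℝ) (hΔ : 0 < Δ)
    (c : ℤ → ℝ) (hbd : ∃ B : ℝ, ∀ m : ℤ, |c m| ≤ B)
    (hc : ∀ m : ℤ, 0 ≤ c m - c (m - 1) ∧ c m - c (m - 1) ≤ Δ)
    (f : ℝ → ℝ)
    (hf : ∀ x : ℝ, f x = ∑' m : ℤ, c m * bspline n (x / Δ - (m : ℝ))) :
    Differentiable ℝ f ∧ (∀ x : ℝ, 0 ≤ deriv f x ∧ deriv f x ≤ 1) ∧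
      (∀ x y : ℝ, y < x → 0 ≤ f x - f y ∧ f x - f y ≤ x - y) := by
  obtain ⟨k, rfl⟩ : ∃ k, n = k + 2 := ⟨n - 2, by omega⟩
  clear hn hbd
  have main : ∀ x0 : ℝ, ∃ d : ℝ, HasDerivAt f d x0 ∧ 0 ≤ d ∧ d ≤ 1 := by
    intro x0
    set a : ℤ := ⌊x0 / Δ⌋ - (k + 8) with ha
    set b : ℤ := ⌊x0 / Δ⌋ + (k + 8) with hb
    set S : Finset ℤ := Finset.Icc a b with hS
    have hfl : (⌊x0 / Δ⌋ : ℝ) ≤ x0 / Δ := Int.floor_le _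
    have hfl2 : x0 / Δ < (⌊x0 / Δ⌋ : ℝ) + 1 := Int.lt_floor_add_one _
    set F : ℝ → ℝ := fun x => ∑ m ∈ S, c m * bspline (k + 2) (x / Δ - (m : ℝ)) with hF
    -- f agrees with the finite sum F on a ball around x0
    have hloc : ∀ x ∈ Metric.ball x0 Δ, f x = F x := by
      intro x hx
      rw [Metric.mem_ball, Real.dist_eq] at hx
      rw [hf x, hF]
      apply tsum_eq_sum
      intro m hm
      rw [hS, Finset.mem_Icc] at hm
      push_neg at hm
      have h1 : |x / Δ - x0 / Δ| < 1 := by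
        rw [div_sub_div_same, abs_div, abs_of_pos hΔ, div_lt_one hΔ]
        exact hx
      have hz : bspline (k + 2) (x / Δ - (m : ℝ)) = 0 := by
        apply bspline_zero
        push_cast
        rcases (by omega : m ≤ a - 1 ∨ b + 1 ≤ m) with h | h
        · have hm' : (m : ℝ) ≤ (⌊x0 / Δ⌋ : ℝ) - (k + 9) := by
            have : (m : ℝ) ≤ ((⌊x0 / Δ⌋ - (k + 9) : ℤ) : ℝ) := Int.cast_le.2 (by omega)
            push_cast at this; linarith
          rcases abs_cases (x / Δ - (m : ℝ)) with ⟨h3, h4⟩ | ⟨h3, h4⟩ <;>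
            rcases abs_cases (x / Δ - x0 / Δ) with ⟨h5, h6⟩ | ⟨h5, h6⟩ <;> linarith
        · have hm' : (⌊x0 / Δ⌋ : ℝ) + (k + 9) ≤ (m : ℝ) := by
            have : ((⌊x0 / Δ⌋ + (k + 9) : ℤ) : ℝ) ≤ (m : ℝ) := Int.cast_le.2 (by omega)
            push_cast at this; linarith
          rcases abs_cases (x / Δ - (m : ℝ)) with ⟨h3, h4⟩ | ⟨h3, h4⟩ <;>
            rcases abs_cases (x / Δ - x0 / Δ) with ⟨h5, h6⟩ | ⟨h5, h6⟩ <;> linarith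
      rw [hz, mul_zero]
    -- F (hence f) is differentiable at x0
    set d : ℝ := ∑ m ∈ S, c m * ((bspline (k + 1) (x0 / Δ - (m : ℝ) + 1 / 2) -
      bspline (k + 1) (x0 / Δ - (m : ℝ) - 1 / 2)) * Δ⁻¹) with hd
    have hFd : HasDerivAt F d x0 := by
      rw [hF, hd]
      apply HasDerivAt.fun_sum
      intro m _
      have hinner : HasDerivAt (fun x : ℝ => x / Δ - (m : ℝ)) Δ⁻¹ x0 := by
        simpa [one_div] using ((hasDerivAt_id x0).div_const Δ).sub_const (m : ℝ)
      exact ((bspline_hasDerivAt' k (x0 / Δ - (m : ℝ))).comp x0 hinner).const_mul (c m)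
    have hfd : HasDerivAt f d x0 :=
      hFd.congr_of_eventuallyEq (Filter.eventuallyEq_of_mem (Metric.ball_mem_nhds x0 hΔ) hloc)
    -- rewrite d via the difference coefficients
    set y : ℝ := x0 / Δ + 1 / 2 with hy
    set g : ℤ → ℝ := fun m => bspline (k + 1) (y - (m : ℝ)) with hg
    have hterm : ∀ m ∈ S, c m * ((bspline (k + 1) (x0 / Δ - (m : ℝ) + 1 / 2) -
        bspline (k + 1) (x0 / Δ - (m : ℝ) - 1 / 2)) * Δ⁻¹) = c m * (g m - g (m + 1)) * Δ⁻¹ := by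
      intro m _
      have e1 : x0 / Δ - (m : ℝ) + 1 / 2 = y - (m : ℝ) := by rw [hy]; ring
      have e2 : x0 / Δ - (m : ℝ) - 1 / 2 = y - ((m + 1 : ℤ) : ℝ) := by
        rw [hy]; push_cast; ring
      rw [e1, e2, hg]
      ring
    have hd2 : d = (∑ m ∈ S, c m * (g m - g (m + 1))) * Δ⁻¹ := by
      rw [hd, Finset.sum_congr rfl hterm, ← Finset.sum_mul]
    have hga : g a = 0 := by
      rw [hg]
      apply bspline_zero
      have hac : ((a : ℤ) : ℝ) = (⌊x0 / Δ⌋ : ℝ) - (k + 8) := by rw [ha]; push_cast; ring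
      rw [hac, hy]
      push_cast
      rw [abs_of_nonneg (by linarith)]
      linarith
    have hgb : g (b + 1) = 0 := by
      rw [hg]
      apply bspline_zero
      have hbc : ((b + 1 : ℤ) : ℝ) = (⌊x0 / Δ⌋ : ℝ) + (k + 9) := by rw [hb]; push_cast; ring
      rw [hbc, hy]
      push_cast
      rw [abs_of_nonpos (by linarith)]
      linarith
    have habl : ∑ m ∈ S, c m * (g m - g (m + 1)) =
        ∑ m ∈ S, (c m - c (m - 1)) * g m := by
      rw [hS]
      rw [abel_helper a c g b (by omega), hga, hgb]
      ring
    have hpart : ∑ m ∈ S, g m = 1 := by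
      rw [hg]
      apply bspline_partition k y S
      intro m hm
      rw [hS, Finset.mem_Icc]
      constructor
      · rw [← @Int.cast_le ℝ]
        have hac : ((a : ℤ) : ℝ) = (⌊x0 / Δ⌋ : ℝ) - (k + 8) := by rw [ha]; push_cast; ring
        rw [hac]
        rcases abs_cases (y - (m : ℝ)) with ⟨h3, h4⟩ | ⟨h3, h4⟩ <;> rw [hy] at * <;> linarith
      · rw [← @Int.cast_le ℝ]
        have hbc : ((b : ℤ) : ℝ) = (⌊x0 / Δ⌋ : ℝ) + (k + 8) := by rw [hb]; push_cast; ring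
        rw [hbc]
        rcases abs_cases (y - (m : ℝ)) with ⟨h3, h4⟩ | ⟨h3, h4⟩ <;> rw [hy] at * <;> linarith
    have hT0 : 0 ≤ ∑ m ∈ S, (c m - c (m - 1)) * g m :=
      Finset.sum_nonneg fun m _ => mul_nonneg (hc m).1 (bspline_nonneg _ _)
    have hT1 : ∑ m ∈ S, (c m - c (m - 1)) * g m ≤ Δ := by
      calc ∑ m ∈ S, (c m - c (m - 1)) * g m ≤ ∑ m ∈ S, Δ * g m :=
            Finset.sum_le_sum fun m _ =>
              mul_le_mul_of_nonneg_right (hc m).2 (bspline_nonneg _ _)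
        _ = Δ * ∑ m ∈ S, g m := by rw [Finset.mul_sum]
        _ = Δ := by rw [hpart, mul_one]
    refine ⟨d, hfd, ?_, ?_⟩
    · rw [hd2, habl]
      exact mul_nonneg hT0 (inv_nonneg.2 hΔ.le)
    · rw [hd2, habl]
      calc (∑ m ∈ S, (c m - c (m - 1)) * g m) * Δ⁻¹ ≤ Δ * Δ⁻¹ :=
            mul_le_mul_of_nonneg_right hT1 (inv_nonneg.2 hΔ.le)
        _ = 1 := mul_inv_cancel₀ hΔ.ne'
  have hdiff : Differentiable ℝ f := fun x => ((main x).choose_spec.1).differentiableAt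
  have hderiv : ∀ x : ℝ, 0 ≤ deriv f x ∧ deriv f x ≤ 1 := by
    intro x
    obtain ⟨d, hd, h0, h1⟩ := main x
    rw [hd.deriv]
    exact ⟨h0, h1⟩
  refine ⟨hdiff, hderiv, ?_⟩
  intro x y hxy
  have hmono : Monotone f := monotone_of_deriv_nonneg hdiff fun z => (hderiv z).1
  have hmono2 : Monotone (fun z : ℝ => z - f z) := by
    apply monotone_of_deriv_nonneg (differentiable_id.sub hdiff)
    intro z
    rw [deriv_sub differentiableAt_id (hdiff z), deriv_id]
    linarith [(hderiv z).2]
  constructor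
  · have := hmono hxy.le
    linarith
  · have := hmono2 hxy.le
    simp only at this
    linarith
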